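/- Let D ⊆ ℂ be an open disk centered at a point x₀ ∈ ℝ, and let H : D → ℂ be holomorphic and injective with H(D ∩ ℝ) ⊆ ℝ. Then there exist K > 0 and an open disk D' ⊆ D centered at x₀ such that for every z ∈ D' with Im z ≠ 0, one has Im H(z) ≠ 0 and 1/K ≤ (|Im z| · |H'(z)|) / |Im H(z)| ≤ K. (This expresses that the pullback under H of the hyperbolic density λ_ℍ(w) = 1/|Im w| of the upper half plane is comparable to λ_ℍ near the real boundary point x₀.) -/

import Mathlib

open Metric

open Complex Filter Topology Set Real in
private lemma conj_comp_hasDerivAt' {f : ℂ → ℂ} {c z : ℂ}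
    (h : HasDerivAt f c ((starRingEnd ℂ) z)) :
    HasDerivAt (fun w => (starRingEnd ℂ) (f ((starRingEnd ℂ) w))) ((starRingEnd ℂ) c) z := by
  rw [hasDerivAt_iff_tendsto_slope] at h ⊢
  have h1 : Tendsto (fun w : ℂ => (starRingEnd ℂ) w) (𝓝[≠] z) (𝓝[≠] ((starRingEnd ℂ) z)) := by
    apply ContinuousWithinAt.tendsto_nhdsWithin
    · exact (continuous_conj).continuousWithinAt
    · intro w hw hc
      exact hw ((starRingEnd ℂ).injective (by simpa using hc))
  have h2 : Tendsto (fun w : ℂ => (starRingEnd ℂ) (slope f ((starRingEnd ℂ) z) ((starRingEnd ℂ) w)))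
      (𝓝[≠] z) (𝓝 ((starRingEnd ℂ) c)) :=
    ((continuous_conj).continuousAt.tendsto).comp (h.comp h1)
  have : (fun w : ℂ => (starRingEnd ℂ) (slope f ((starRingEnd ℂ) z) ((starRingEnd ℂ) w)))
      = slope (fun w => (starRingEnd ℂ) (f ((starRingEnd ℂ) w))) z := by
    funext w
    simp [slope_def_field, map_div₀, map_sub]
  rwa [this] at h2
open Complex Filter Topology Set Real in
private lemma aux_deriv_ne_zero {z₀ : ℂ} {ρ : ℝ} (hρ : 0 < ρ) {H : ℂ → ℂ}
    (hH : DifferentiableOn ℂ H (ball z₀ ρ)) (hinj : Set.InjOn H (ball z₀ ρ)) :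
    deriv H z₀ ≠ 0 := by
  intro ha
  have hz₀ : z₀ ∈ ball z₀ ρ := mem_ball_self hρ
  have hAn : AnalyticOnNhd ℂ H (ball z₀ ρ) := hH.analyticOnNhd isOpen_ball
  have hfa : AnalyticAt ℂ (fun z => H z - H z₀) z₀ := (hAn z₀ hz₀).sub analyticAt_const
  -- the difference is not eventually zero
  have hnev : ¬ ∀ᶠ z in 𝓝 z₀, H z - H z₀ = 0 := by
    intro hev
    rw [Metric.eventually_nhds_iff_ball] at hev
    obtain ⟨δ, hδpos, hδ⟩ := hev
    have hδ'pos : 0 < min δ ρ := lt_min hδpos hρ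
    have hmem : z₀ + ((min δ ρ)/2 : ℝ) ∈ ball z₀ (min δ ρ) := by
      simp only [mem_ball, Complex.dist_eq, add_sub_cancel_left]
      rw [Complex.norm_real, Real.norm_eq_abs, abs_of_pos (half_pos hδ'pos)]
      exact half_lt_self hδ'pos
    have h1 : H (z₀ + ((min δ ρ)/2 : ℝ)) - H z₀ = 0 :=
      hδ _ (ball_subset_ball (min_le_left _ _) hmem)
    have h2 : z₀ + ((min δ ρ)/2 : ℝ) = z₀ :=
      hinj (ball_subset_ball (min_le_right _ _) hmem) hz₀ (sub_eq_zero.mp h1)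
    have h3 : (((min δ ρ)/2 : ℝ) : ℂ) = 0 := by
      have := add_eq_left.mp h2
      exact this
    rw [Complex.ofReal_eq_zero] at h3
    linarith
  -- finite order n
  have hot : analyticOrderAt (fun z => H z - H z₀) z₀ ≠ ⊤ := fun h => hnev (analyticOrderAt_eq_top.mp h)
  obtain ⟨n, horder⟩ : ∃ n : ℕ, analyticOrderAt (fun z => H z - H z₀) z₀ = n := by
    cases h : analyticOrderAt (fun z => H z - H z₀) z₀ with
    | top => exact absurd h hot
    | coe n => exact ⟨n, rfl⟩
  obtain ⟨g, hg_an, hg0, hg_eq⟩ := hfa.analyticOrderAt_eq_natCast.mp horder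
  -- n ≠ 0
  have hn0 : n ≠ 0 := by
    intro h
    subst h
    have := hg_eq.self_of_nhds
    simp at this
    exact hg0 this.symm
  -- n ≠ 1
  have hn1 : n ≠ 1 := by
    intro h
    subst h
    have hd : HasDerivAt (fun z => (z - z₀) ^ 1 • g z) (g z₀) z₀ := by
      have h1 : HasDerivAt (fun z : ℂ => z - z₀) 1 z₀ := (hasDerivAt_id z₀).sub_const z₀
      have h2 : HasDerivAt g (deriv g z₀) z₀ := hg_an.differentiableAt.hasDerivAt
      have := h1.mul h2
      simp only [pow_one, smul_eq_mul]; exact this.congr_deriv (by simp)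
    have hde : deriv (fun z => H z - H z₀) z₀ = g z₀ := by
      rw [Filter.EventuallyEq.deriv_eq hg_eq]
      exact hd.deriv
    rw [deriv_sub_const, ha] at hde
    exact hg0 hde.symm
  have hn2 : 2 ≤ n := by omega
  have hnC : (n : ℂ) ≠ 0 := Nat.cast_ne_zero.mpr hn0
  -- local n-th root
  set c₀ : ℂ := Complex.exp (Complex.log (g z₀) / n) with hc₀def
  have hc₀n : c₀ ^ n = g z₀ := by
    rw [hc₀def, ← Complex.exp_nat_mul, mul_div_cancel₀ _ hnC, Complex.exp_log hg0]
  have hc₀ne : c₀ ≠ 0 := Complex.exp_ne_zero _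
  set v : ℂ → ℂ := fun z => g z / g z₀ with hvdef
  have hv_an : AnalyticAt ℂ v z₀ := hg_an.div analyticAt_const hg0
  have hv1 : v z₀ = 1 := div_self hg0
  set q : ℂ → ℂ := fun z => c₀ * Complex.exp (Complex.log (v z) / n) with hqdef
  have hq_an : AnalyticAt ℂ q z₀ := by
    apply analyticAt_const.mul
    exact ((hv_an.clog (by rw [hv1]; exact Complex.one_mem_slitPlane)).div
      analyticAt_const hnC).cexp
  have hq0 : q z₀ = c₀ := by
    simp [hqdef, hv1]
  set ψ : ℂ → ℂ := fun z => (z - z₀) * q z with hψdef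
  have hψ_an : AnalyticAt ℂ ψ z₀ :=
    ((analyticAt_id.sub analyticAt_const).mul hq_an)
  have hψ0 : ψ z₀ = 0 := by simp [hψdef]
  -- eventually ψ^n = H z - H z₀
  have hgne : ∀ᶠ z in 𝓝 z₀, g z ≠ 0 := hg_an.continuousAt.eventually_ne hg0
  have hev : ∀ᶠ z in 𝓝 z₀, ψ z ^ n = H z - H z₀ := by
    filter_upwards [hg_eq, hgne] with z h1 h2
    have hvz : v z ≠ 0 := div_ne_zero h2 hg0
    have hexp : (Complex.exp (Complex.log (v z) / n)) ^ n = v z := by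
      rw [← Complex.exp_nat_mul, mul_div_cancel₀ _ hnC, Complex.exp_log hvz]
    rw [h1, smul_eq_mul, hψdef]
    simp only [mul_pow, hqdef]
    rw [hexp, hc₀n, hvdef]
    field_simp
  -- ψ has nonzero derivative at z₀, hence not eventually constant
  have hdψ : HasDerivAt ψ c₀ z₀ := by
    have h1 : HasDerivAt (fun z : ℂ => z - z₀) 1 z₀ := (hasDerivAt_id z₀).sub_const z₀
    have h2 : HasDerivAt q (deriv q z₀) z₀ := hq_an.differentiableAt.hasDerivAt
    have := h1.mul h2
    exact this.congr_deriv (by simp [hq0])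
  have hnotconst : ¬ ∀ᶠ z in 𝓝 z₀, ψ z = ψ z₀ := by
    intro hconst
    have : deriv ψ z₀ = deriv (fun _ => ψ z₀) z₀ := Filter.EventuallyEq.deriv_eq hconst
    rw [hdψ.deriv, deriv_const] at this
    exact hc₀ne this
  have hmap : 𝓝 (ψ z₀) ≤ Filter.map ψ (𝓝 z₀) :=
    hψ_an.eventually_constant_or_nhds_le_map_nhds.resolve_left hnotconst
  rw [hψ0] at hmap
  -- small ball where everything holds
  rw [Metric.eventually_nhds_iff_ball] at hev
  obtain ⟨δ, hδpos, hδ⟩ := hev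
  have hδ'pos : 0 < min δ ρ := lt_min hδpos hρ
  have hUnhds : ball z₀ (min δ ρ) ∈ 𝓝 z₀ := ball_mem_nhds _ hδ'pos
  have himg : ψ '' (ball z₀ (min δ ρ)) ∈ 𝓝 (0 : ℂ) := by
    apply hmap
    rw [Filter.mem_map]
    filter_upwards [hUnhds] with z hz
    exact Set.mem_image_of_mem _ hz
  obtain ⟨η, hηpos, hηball⟩ := Metric.mem_nhds_iff.mp himg
  -- two distinct points with equal n-th powers
  set w : ℂ := ((η / 2 : ℝ) : ℂ) with hwdef
  set ζ : ℂ := Complex.exp (2 * π * I / n) with hζdef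
  have hwne : w ≠ 0 := by
    simp only [hwdef, ne_eq, Complex.ofReal_eq_zero]
    intro h; linarith
  have hwmem : w ∈ ball (0 : ℂ) η := by
    simp only [mem_ball, dist_zero_right, hwdef, Complex.norm_real, Real.norm_eq_abs]
    rw [abs_of_pos (by linarith)]
    linarith
  have hζnorm : ‖ζ‖ = 1 := by
    rw [hζdef, Complex.norm_exp]
    norm_num [Complex.div_re, Complex.mul_re, Complex.mul_im, Complex.normSq]
  have hζwmem : ζ * w ∈ ball (0 : ℂ) η := by
    simp only [mem_ball, dist_zero_right] at hwmem ⊢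
    calc ‖ζ * w‖ = ‖ζ‖ * ‖w‖ := by rw [norm_mul]
    _ = ‖w‖ := by rw [hζnorm, one_mul]
    _ < η := hwmem
  have hζn : ζ ^ n = 1 := by
    rw [hζdef, ← Complex.exp_nat_mul, mul_div_cancel₀ _ hnC, Complex.exp_two_pi_mul_I]
  have hζne1 : ζ ≠ 1 := by
    intro hζ1
    rw [hζdef, Complex.exp_eq_one_iff] at hζ1
    obtain ⟨k, hk⟩ := hζ1
    have h2πI : (2 * π * I : ℂ) ≠ 0 := by
      simp [Complex.I_ne_zero, Real.pi_ne_zero]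
    have hinv : (n : ℂ)⁻¹ = (k : ℂ) := by
      have : (2 * π * I) * ((n:ℂ)⁻¹ - k) = 0 := by
        field_simp at hk
        rw [inv_eq_of_mul_eq_one_right hk.symm, sub_self, mul_zero]
      rcases mul_eq_zero.mp this with h | h
      · exact absurd h h2πI
      · exact sub_eq_zero.mp h
    have hre : ((n : ℝ))⁻¹ = (k : ℝ) := by
      have := congrArg Complex.re hinv
      simpa using this
    have hn2' : (2 : ℝ) ≤ n := by exact_mod_cast hn2
    rcases le_or_gt (k : ℝ) 0 with h | h
    · have hnp : (0 : ℝ) < ((n : ℝ))⁻¹ := by positivity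
      linarith
    · have hk1 : (1 : ℝ) ≤ (k : ℝ) := by
        exact_mod_cast (by exact_mod_cast h : (0:ℤ) < k)
      have : ((n : ℝ))⁻¹ < 1 := by
        rw [inv_lt_one_iff₀]
        right; linarith
      linarith
  obtain ⟨z₁, hz₁mem, hψ1⟩ := hηball hwmem
  obtain ⟨z₂, hz₂mem, hψ2⟩ := hηball hζwmem
  have hH1 : H z₁ - H z₀ = w ^ n := by
    rw [← hδ z₁ (ball_subset_ball (min_le_left _ _) hz₁mem), hψ1]
  have hH2 : H z₂ - H z₀ = w ^ n := by
    rw [← hδ z₂ (ball_subset_ball (min_le_left _ _) hz₂mem), hψ2, mul_pow, hζn, one_mul]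
  have hz12 : z₁ = z₂ := by
    apply hinj (ball_subset_ball (min_le_right _ _) hz₁mem)
      (ball_subset_ball (min_le_right _ _) hz₂mem)
    exact sub_left_inj.mp (hH1.trans hH2.symm)
  rw [hz12, hψ2] at hψ1
  apply hζne1
  have : ζ * w = 1 * w := by rw [one_mul]; exact hψ1
  exact mul_right_cancel₀ hwne this

open Complex Filter Topology Set Real in
/-- Let `D` be an open disk centered at a real point `x₀`, and let `H` be holomorphic
and injective on `D` with `H(D ∩ ℝ) ⊆ ℝ`.  Then there are `K > 0` and a smaller disk
`D'` centered at `x₀` such that for `z ∈ D'` with `Im z ≠ 0` we have `Im H(z) ≠ 0` and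
`1/K ≤ |Im z| |H'(z)| / |Im H(z)| ≤ K`: the pullback under `H` of the hyperbolic
density of the upper half plane is comparable to it near `x₀`. -/
theorem stmt13 (x₀ : ℝ) (ρ : ℝ) (hρ : 0 < ρ) (H : ℂ → ℂ)
    (hH : DifferentiableOn ℂ H (ball (x₀ : ℂ) ρ))
    (hinj : Set.InjOn H (ball (x₀ : ℂ) ρ))
    (hreal : ∀ z ∈ ball (x₀ : ℂ) ρ, z.im = 0 → (H z).im = 0) :
    ∃ K > (0 : ℝ), ∃ ρ' > (0 : ℝ),
      ball (x₀ : ℂ) ρ' ⊆ ball (x₀ : ℂ) ρ ∧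
      ∀ z ∈ ball (x₀ : ℂ) ρ', z.im ≠ 0 →
        (H z).im ≠ 0 ∧
        1 / K ≤ (|z.im| * ‖deriv H z‖) / |(H z).im| ∧
        (|z.im| * ‖deriv H z‖) / |(H z).im| ≤ K := by
  have hx₀ : (x₀ : ℂ) ∈ ball (x₀ : ℂ) ρ := mem_ball_self hρ
  have hAn : AnalyticOnNhd ℂ H (ball (x₀ : ℂ) ρ) := hH.analyticOnNhd isOpen_ball
  -- conjugation preserves balls centered at a real point
  have hconjmem : ∀ (r : ℝ), ∀ z ∈ ball (x₀ : ℂ) r, (starRingEnd ℂ) z ∈ ball (x₀ : ℂ) r := by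
    intro r z hz
    simp only [mem_ball, Complex.dist_eq] at hz ⊢
    have e : (starRingEnd ℂ) z - (x₀ : ℂ) = (starRingEnd ℂ) (z - (x₀ : ℂ)) := by
      rw [map_sub, Complex.conj_ofReal]
    rw [e, Complex.norm_conj]
    exact hz
  -- the reflected function
  set G : ℂ → ℂ := fun z => (starRingEnd ℂ) (H ((starRingEnd ℂ) z)) with hGdef
  have hG_diff : ∀ z ∈ ball (x₀ : ℂ) ρ, HasDerivAt G
      ((starRingEnd ℂ) (deriv H ((starRingEnd ℂ) z))) z := by
    intro z hz
    exact conj_comp_hasDerivAt'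
      ((hH.differentiableAt (isOpen_ball.mem_nhds (hconjmem ρ z hz))).hasDerivAt)
  have hG_an : AnalyticOnNhd ℂ G (ball (x₀ : ℂ) ρ) := by
    apply DifferentiableOn.analyticOnNhd _ isOpen_ball
    exact fun z hz => (hG_diff z hz).differentiableAt.differentiableWithinAt
  -- H agrees with G frequently near x₀ (at real points)
  have hfreq : ∃ᶠ z in 𝓝[≠] (x₀ : ℂ), H z = G z := by
    rw [Filter.frequently_iff]
    intro U hU
    rw [mem_nhdsWithin] at hU
    obtain ⟨V, hVopen, hVx, hVU⟩ := hU
    obtain ⟨ε, hεpos, hεV⟩ := Metric.isOpen_iff.mp hVopen _ hVx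
    set t : ℝ := min ε ρ / 2 with htdef
    have htpos : 0 < t := by positivity
    have htε : t < ε := by
      have : min ε ρ ≤ ε := min_le_left _ _
      simp only [htdef]; linarith
    have htρ : t < ρ := by
      have : min ε ρ ≤ ρ := min_le_right _ _
      simp only [htdef]; linarith
    set zpt : ℂ := (x₀ : ℂ) + (t : ℂ) with hzptdef
    have hdist : dist zpt (x₀ : ℂ) = t := by
      simp only [hzptdef, Complex.dist_eq, add_sub_cancel_left, Complex.norm_real, Real.norm_eq_abs,
        abs_of_pos htpos]
    have hzreal : zpt.im = 0 := by simp [hzptdef]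
    have hzball : zpt ∈ ball (x₀ : ℂ) ρ := by
      simp only [mem_ball, hdist]; exact htρ
    have hconjz : (starRingEnd ℂ) zpt = zpt := Complex.conj_eq_iff_im.mpr hzreal
    have hHreal : (H zpt).im = 0 := hreal zpt hzball hzreal
    refine ⟨zpt, hVU ⟨hεV (by simp only [mem_ball, hdist]; exact htε), ?_⟩, ?_⟩
    · simp only [Set.mem_compl_iff, Set.mem_singleton_iff, hzptdef]
      intro h
      have : (t : ℂ) = 0 := by linear_combination h
      rw [Complex.ofReal_eq_zero] at this
      linarith
    · simp only [hGdef, hconjz]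
      exact (Complex.conj_eq_iff_im.mpr hHreal).symm
  have hEq : Set.EqOn H G (ball (x₀ : ℂ) ρ) :=
    hAn.eqOn_of_preconnected_of_frequently_eq hG_an
      (convex_ball (x₀ : ℂ) ρ).isPreconnected hx₀ hfreq
  -- the reflection formula
  have hrefl : ∀ z ∈ ball (x₀ : ℂ) ρ, H ((starRingEnd ℂ) z) = (starRingEnd ℂ) (H z) := by
    intro z hz
    have h1 : H z = (starRingEnd ℂ) (H ((starRingEnd ℂ) z)) := hEq hz
    have := congrArg (starRingEnd ℂ) h1
    simpa using this.symm
  -- a = deriv H x₀ is nonzero and real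
  set a : ℂ := deriv H (x₀ : ℂ) with hadef
  have ha0 : a ≠ 0 := aux_deriv_ne_zero hρ hH hinj
  have haim : a.im = 0 := by
    have hd : HasDerivAt H a ((starRingEnd ℂ) (x₀ : ℂ)) := by
      rw [Complex.conj_ofReal]
      exact (hH.differentiableAt (isOpen_ball.mem_nhds hx₀)).hasDerivAt
    have hdG : HasDerivAt G ((starRingEnd ℂ) a) (x₀ : ℂ) := conj_comp_hasDerivAt' hd
    have heqev : H =ᶠ[𝓝 (x₀ : ℂ)] G := Filter.eventuallyEq_of_mem
      (isOpen_ball.mem_nhds hx₀) hEq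
    have h1 : deriv H (x₀ : ℂ) = deriv G (x₀ : ℂ) := heqev.deriv_eq
    rw [hdG.deriv, ← hadef] at h1
    have : (starRingEnd ℂ) a = a := h1.symm
    rw [Complex.conj_eq_iff_im] at this
    exact this
  have haR : a = ((a.re : ℝ) : ℂ) := by
    apply Complex.ext <;> simp [haim]
  set m : ℝ := ‖a‖ with hmdef
  have hm : 0 < m := by
    rw [hmdef]
    exact norm_pos_iff.mpr ha0
  have hmre : m = |a.re| := by
    rw [hmdef]
    nth_rewrite 1 [haR]
    exact (Complex.norm_real _).trans (Real.norm_eq_abs _)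
  -- deriv H is continuous at x₀
  have hdercont : ContinuousAt (deriv H) (x₀ : ℂ) := (hAn.deriv (x₀ : ℂ) hx₀).continuousAt
  have : ∀ᶠ z in 𝓝 (x₀ : ℂ), dist (deriv H z) a < m / 2 := by
    have := Metric.tendsto_nhds.mp hdercont.tendsto (m / 2) (by linarith)
    simpa [hadef] using this
  rw [Metric.eventually_nhds_iff_ball] at this
  obtain ⟨δ₁, hδ₁pos, hδ₁⟩ := this
  set ρ' : ℝ := min δ₁ ρ with hρ'def
  have hρ'pos : 0 < ρ' := lt_min hδ₁pos hρ
  have hsub : ball (x₀ : ℂ) ρ' ⊆ ball (x₀ : ℂ) ρ := ball_subset_ball (min_le_right _ _)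
  have hsub1 : ball (x₀ : ℂ) ρ' ⊆ ball (x₀ : ℂ) δ₁ := ball_subset_ball (min_le_left _ _)
  -- derivative bound on the small ball
  have hderivsmall : ∀ w ∈ ball (x₀ : ℂ) ρ', ‖deriv H w - a‖ ≤ m / 2 := by
    intro w hw
    have := hδ₁ w (hsub1 hw)
    rw [dist_eq_norm] at this
    exact this.le
  -- MVT estimate for H z - a z
  have hMVT : ∀ z ∈ ball (x₀ : ℂ) ρ',
      ‖(H z - a * z) - (H ((starRingEnd ℂ) z) - a * (starRingEnd ℂ) z)‖
        ≤ m / 2 * ‖z - (starRingEnd ℂ) z‖ := by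
    intro z hz
    have hconv : Convex ℝ (ball (x₀ : ℂ) ρ') := convex_ball _ _
    have hder : ∀ w ∈ ball (x₀ : ℂ) ρ',
        HasDerivWithinAt (fun z : ℂ => H z - a * z) (deriv H w - a) (ball (x₀ : ℂ) ρ') w := by
      intro w hw
      have h1 : HasDerivAt H (deriv H w) w :=
        (hH.differentiableAt (isOpen_ball.mem_nhds (hsub hw))).hasDerivAt
      have h2 : HasDerivAt (fun z : ℂ => H z - a * z) (deriv H w - a) w := by
        exact (h1.sub ((hasDerivAt_id' w).const_mul a)).congr_deriv (by ring)
      exact h2.hasDerivWithinAt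
    have := hconv.norm_image_sub_le_of_norm_hasDerivWithin_le hder hderivsmall
      (hconjmem ρ' z hz) hz
    simpa using this
  -- main bounds
  refine ⟨3, by norm_num, ρ', hρ'pos, hsub, ?_⟩
  intro z hz hzim
  have hzρ : z ∈ ball (x₀ : ℂ) ρ := hsub hz
  -- key imaginary part estimate
  have hkey : |(H z).im - a.re * z.im| ≤ m / 2 * |z.im| := by
    have h1 := hMVT z hz
    have e1 : (H z - a * z) - (H ((starRingEnd ℂ) z) - a * (starRingEnd ℂ) z)
        = ((2 * ((H z).im - a.re * z.im) : ℝ) : ℂ) * Complex.I := by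
      rw [hrefl z hzρ]
      have e2 : H z - (starRingEnd ℂ) (H z) = ((2 * (H z).im : ℝ) : ℂ) * Complex.I :=
        Complex.sub_conj _
      have e3 : z - (starRingEnd ℂ) z = ((2 * z.im : ℝ) : ℂ) * Complex.I :=
        Complex.sub_conj _
      calc H z - a * z - ((starRingEnd ℂ) (H z) - a * (starRingEnd ℂ) z)
          = (H z - (starRingEnd ℂ) (H z)) - a * (z - (starRingEnd ℂ) z) := by ring
        _ = ((2 * (H z).im : ℝ) : ℂ) * Complex.I
              - ((a.re : ℝ) : ℂ) * (((2 * z.im : ℝ) : ℂ) * Complex.I) := by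
            rw [e2, e3, ← haR]
        _ = ((2 * ((H z).im - a.re * z.im) : ℝ) : ℂ) * Complex.I := by
            push_cast; ring
    have e4 : z - (starRingEnd ℂ) z = ((2 * z.im : ℝ) : ℂ) * Complex.I := Complex.sub_conj _
    rw [e1, e4] at h1
    simp only [norm_mul, Complex.norm_real, Real.norm_eq_abs, Complex.norm_I, mul_one,
      abs_mul] at h1
    rw [_root_.abs_of_nonneg (by norm_num : (0:ℝ) ≤ 2)] at h1
    nlinarith [abs_nonneg ((H z).im - a.re * z.im), abs_nonneg z.im]
  have ht : 0 < |z.im| := abs_pos.mpr hzim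
  -- bounds for |Im H z|
  have haRz : |a.re * z.im| = m * |z.im| := by rw [abs_mul, hmre]
  have hlow : m / 2 * |z.im| ≤ |(H z).im| := by
    have := abs_sub_abs_le_abs_sub (a.re * z.im) ((H z).im)
    have h2 : |a.re * z.im - (H z).im| = |(H z).im - a.re * z.im| := abs_sub_comm _ _
    rw [h2, haRz] at this
    nlinarith
  have hhigh : |(H z).im| ≤ 3 * m / 2 * |z.im| := by
    have := abs_sub_abs_le_abs_sub ((H z).im) (a.re * z.im)
    rw [haRz] at this
    nlinarith
  have hHim : (H z).im ≠ 0 := by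
    intro h
    rw [h, abs_zero] at hlow
    nlinarith
  have hu : 0 < |(H z).im| := abs_pos.mpr hHim
  -- bounds for the derivative
  have hd1 : ‖deriv H z - a‖ ≤ m / 2 := hderivsmall z hz
  have hnorma : ‖a‖ = m := hmdef.symm
  have hdlow : m / 2 ≤ ‖deriv H z‖ := by
    have h4 := norm_sub_norm_le a (deriv H z)
    have h3 : ‖a - deriv H z‖ = ‖deriv H z - a‖ := norm_sub_rev _ _
    linarith
  have hdhigh : ‖deriv H z‖ ≤ 3 * m / 2 := by
    have h4 := norm_sub_norm_le (deriv H z) a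
    linarith
  refine ⟨hHim, ?_, ?_⟩
  · rw [le_div_iff₀ hu]
    have e : m / 2 * |z.im| ≤ |z.im| * ‖deriv H z‖ := by
      have := mul_le_mul_of_nonneg_left hdlow (le_of_lt ht)
      linarith
    linarith
  · rw [div_le_iff₀ hu]
    have e2 : |z.im| * ‖deriv H z‖ ≤ |z.im| * (3 * m / 2) :=
      mul_le_mul_of_nonneg_left hdhigh (le_of_lt ht)
    linarith
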